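/- For every positive integer m, the series identity Σ_{j=2}^{∞} (j−2)!·(m−1)!/((m+j−1)!) = 1/m² holds; equivalently, 1/m² = Σ_{j=2}^{∞} (j−2)!/(m·(m+1)⋯(m+j−1)). -/

import Mathlib

open Filter Finset Topology

/-- for every positive integer m,
Σ_{j=2}^∞ (j-2)!·(m-1)!/((m+j-1)!) = 1/m² (reindexed by j = i + 2). -/
theorem series_inv_sq (m : ℕ) (hm : 1 ≤ m) :
    ∑' i : ℕ, ((i.factorial : ℝ) * ((m - 1).factorial : ℝ)) / ((m + i + 1).factorial : ℝ)
      = 1 / (m : ℝ) ^ 2 := by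
  have hm0 : (0:ℝ) < m := by exact_mod_cast hm
  set b : ℕ → ℝ := fun i => ((i.factorial : ℝ) * ((m - 1).factorial : ℝ)) / ((m + i).factorial : ℝ)
    with hb
  have key : ∀ i : ℕ, ((i.factorial : ℝ) * ((m - 1).factorial : ℝ)) / ((m + i + 1).factorial : ℝ)
      = (b i - b (i+1)) / m := by
    intro i
    have h1 : ((m + i + 1).factorial : ℝ) = (m + i + 1) * (m + i).factorial := by
      rw [show m + i + 1 = (m + i) + 1 from rfl, Nat.factorial_succ]; push_cast; ring
    have h2 : (((i+1)).factorial : ℝ) = (i + 1) * i.factorial := by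
      rw [Nat.factorial_succ]; push_cast; ring
    have h3 : m + (i + 1) = m + i + 1 := by ring
    simp only [hb, h3]
    rw [h1, h2]
    have hfac : ((m + i).factorial : ℝ) ≠ 0 := by positivity
    have hmi1 : ((m : ℝ) + i + 1) ≠ 0 := by positivity
    field_simp
    ring
  have hb0v : b 0 = 1 / m := by
    have hmf : (m.factorial : ℝ) = m * (m-1).factorial := by
      exact_mod_cast (Nat.mul_factorial_pred (by omega)).symm
    simp only [hb, Nat.add_zero, Nat.factorial_zero, Nat.cast_one, one_mul, hmf]
    rw [div_eq_div_iff (by positivity) hm0.ne']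
    ring
  have hbnonneg : ∀ n, 0 ≤ b n := fun n => by positivity
  have hble : ∀ n : ℕ, b n ≤ ((m-1).factorial : ℝ) / (n+1) := by
    intro n
    have h1 : (n+1) * n.factorial ≤ (m+n).factorial := by
      calc (n+1) * n.factorial = (n+1).factorial := (Nat.factorial_succ n).symm
        _ ≤ (m+n).factorial := Nat.factorial_le (by omega)
    have h1' : ((n:ℝ)+1) * n.factorial ≤ ((m+n).factorial : ℝ) := by exact_mod_cast h1
    rw [hb, div_le_div_iff₀ (by positivity) (by positivity)]
    calc (n.factorial : ℝ) * (m-1).factorial * ((n:ℝ)+1)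
        = ((m-1).factorial : ℝ) * (((n:ℝ)+1) * n.factorial) := by ring
      _ ≤ ((m-1).factorial : ℝ) * ((m+n).factorial : ℝ) := by
          have : (0:ℝ) ≤ ((m-1).factorial : ℝ) := by positivity
          exact mul_le_mul_of_nonneg_left h1' this
  have hbtend : Tendsto b atTop (𝓝 0) := by
    apply squeeze_zero hbnonneg hble
    have h := tendsto_const_div_atTop_nhds_zero_nat ((m-1).factorial : ℝ)
    have h2 := h.comp (tendsto_add_atTop_nat 1)
    simpa only [Function.comp_def, Nat.cast_add, Nat.cast_one] using h2
  have hf : HasSum (fun i : ℕ => ((i.factorial : ℝ) * ((m - 1).factorial : ℝ))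
      / ((m + i + 1).factorial : ℝ)) (b 0 / m) := by
    rw [hasSum_iff_tendsto_nat_of_nonneg (fun i => by positivity)]
    have heq : (fun n : ℕ => ∑ i ∈ Finset.range n,
        ((i.factorial : ℝ) * ((m - 1).factorial : ℝ)) / ((m + i + 1).factorial : ℝ))
        = fun n => (b 0 - b n) / m := by
      funext n
      simp only [key]
      rw [← Finset.sum_div, Finset.sum_range_sub']
    rw [heq]
    have : Tendsto (fun n => (b 0 - b n) / m) atTop (𝓝 ((b 0 - 0) / m)) :=
      (tendsto_const_nhds.sub hbtend).div_const m
    simpa using this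
  rw [hf.tsum_eq, hb0v]
  field_simp
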